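/- The Cherednik–Dunkl operators satisfy the Hecke-type relations: (s_i ⊗ s_i) ξ̃_i = ξ̃_{i+1} (s_i ⊗ s_i) + 1, (s_i ⊗ s_i) ξ̃_{i+1} = ξ̃_i (s_i ⊗ s_i) − 1, and (s_i ⊗ s_i) ξ̃_j = ξ̃_j (s_i ⊗ s_i) for j ≠ i, i+1, where ξ̃_i = α𝒰_i − α. -/

import Mathlib

open MvPolynomial
open scoped Classical

variable {K : Type*} [Field K] {n : ℕ} {B : Type*}

/-- The divided difference `∂_{ij} p = (p − s_{ij} p)/(x_i − x_j)`, defined as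
the (unique, since we are in an integral domain) quotient of `p − s_{ij} p`
by `x_i − x_j`. -/
noncomputable def divDiff (i j : Fin (n + 1)) (p : MvPolynomial (Fin (n + 1)) K) :
    MvPolynomial (Fin (n + 1)) K :=
  if h : ∃ c, p - rename (Equiv.swap i j) p = (X i - X j) * c then h.choose else 0

/-- The operator `op ⊗ ρ(σ)` on `V_λ`-valued polynomials (written as finitely
supported families of polynomials indexed by the basis `B` of the module),
acting by `op` on the polynomial part and by `ρ(σ)` on the module part. -/
noncomputable def mixOp (ρ : Representation K (Equiv.Perm (Fin (n + 1))) (B →₀ K))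
    (op : MvPolynomial (Fin (n + 1)) K → MvPolynomial (Fin (n + 1)) K)
    (σ : Equiv.Perm (Fin (n + 1)))
    (f : B →₀ MvPolynomial (Fin (n + 1)) K) : B →₀ MvPolynomial (Fin (n + 1)) K :=
  f.sum fun b p => ((ρ σ) (Finsupp.single b 1)).sum fun b' c =>
    Finsupp.single b' (MvPolynomial.C c * op p)

/-- The right action of a permutation `σ` simultaneously on the variables and
on the module: `σ ⊗ σ`. -/
noncomputable def permTensor (ρ : Representation K (Equiv.Perm (Fin (n + 1))) (B →₀ K))
    (σ : Equiv.Perm (Fin (n + 1)))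
    (f : B →₀ MvPolynomial (Fin (n + 1)) K) : B →₀ MvPolynomial (Fin (n + 1)) K :=
  mixOp ρ (rename ⇑σ⁻¹) σ⁻¹ f

/-- Multiplication by the variable `x_i`. -/
noncomputable def mulXOp (i : Fin (n + 1))
    (f : B →₀ MvPolynomial (Fin (n + 1)) K) : B →₀ MvPolynomial (Fin (n + 1)) K :=
  f.sum fun b p => Finsupp.single b (X i * p)

/-- The Dunkl operator
`𝒟_i = ∂/∂x_i ⊗ 1 + (1/α) Σ_{j ≠ i} ∂_{ij} ⊗ s_{ij}`. -/
noncomputable def dunklOp (ρ : Representation K (Equiv.Perm (Fin (n + 1))) (B →₀ K))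
    (α : K) (i : Fin (n + 1))
    (f : B →₀ MvPolynomial (Fin (n + 1)) K) : B →₀ MvPolynomial (Fin (n + 1)) K :=
  (f.sum fun b p => Finsupp.single b (pderiv i p)) +
    α⁻¹ • ∑ j ∈ Finset.univ.filter (fun j : Fin (n + 1) => j ≠ i),
      mixOp ρ (divDiff i j) (Equiv.swap i j) f

/-- The Cherednik–Dunkl operator
`𝒰_i = x_i 𝒟_i − (1/α) Σ_{j<i} s_{ij} ⊗ s_{ij}`. -/
noncomputable def cherednikOp (ρ : Representation K (Equiv.Perm (Fin (n + 1))) (B →₀ K))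
    (α : K) (i : Fin (n + 1))
    (f : B →₀ MvPolynomial (Fin (n + 1)) K) : B →₀ MvPolynomial (Fin (n + 1)) K :=
  mulXOp i (dunklOp ρ α i f) -
    α⁻¹ • ∑ j ∈ Finset.univ.filter (fun j : Fin (n + 1) => j < i),
      permTensor ρ (Equiv.swap i j) f

/-- The deformed Cherednik–Dunkl operator `ξ̃_i = α 𝒰_i − α`. -/
noncomputable def xiOp (ρ : Representation K (Equiv.Perm (Fin (n + 1))) (B →₀ K))
    (α : K) (i : Fin (n + 1))
    (f : B →₀ MvPolynomial (Fin (n + 1)) K) : B →₀ MvPolynomial (Fin (n + 1)) K :=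
  α • cherednikOp ρ α i f - α • f

section HeckeAux

variable (ρ : Representation K (Equiv.Perm (Fin (n + 1))) (B →₀ K))
variable {op op1 op2 : MvPolynomial (Fin (n + 1)) K → MvPolynomial (Fin (n + 1)) K}
variable {σ σ1 σ2 τ : Equiv.Perm (Fin (n + 1))}

private lemma key_dvd (i j : Fin (n + 1)) (p : MvPolynomial (Fin (n + 1)) K) :
    (X i - X j) ∣ p - rename (⇑(Equiv.swap i j)) p := by
  induction p using MvPolynomial.induction_on with
  | C a => simp
  | add p q hp hq =>
      have h : p + q - rename (⇑(Equiv.swap i j)) (p + q) =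
          (p - rename (⇑(Equiv.swap i j)) p) + (q - rename (⇑(Equiv.swap i j)) q) := by
        rw [map_add]; ring
      rw [h]; exact dvd_add hp hq
  | mul_X p k hp =>
      rw [map_mul, rename_X]
      have h : p * X k - rename (⇑(Equiv.swap i j)) p * X (Equiv.swap i j k) =
          (p - rename (⇑(Equiv.swap i j)) p) * X k +
            rename (⇑(Equiv.swap i j)) p * (X k - X (Equiv.swap i j k)) := by ring
      rw [h]
      refine dvd_add (hp.mul_right _) (Dvd.dvd.mul_left ?_ _)
      rcases eq_or_ne k i with rfl | hki
      · rw [Equiv.swap_apply_left]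
      rcases eq_or_ne k j with rfl | hkj
      · rw [Equiv.swap_apply_right]
        exact dvd_sub_comm.mp dvd_rfl
      · rw [Equiv.swap_apply_of_ne_of_ne hki hkj, sub_self]
        exact dvd_zero _

private lemma divDiff_spec (i j : Fin (n + 1)) (p : MvPolynomial (Fin (n + 1)) K) :
    (X i - X j) * divDiff i j p = p - rename (⇑(Equiv.swap i j)) p := by
  have h : ∃ c, p - rename (⇑(Equiv.swap i j)) p = (X i - X j) * c := key_dvd i j p
  unfold divDiff
  rw [dif_pos h]
  exact h.choose_spec.symm

private lemma X_sub_ne {i j : Fin (n + 1)} (hij : i ≠ j) :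
    (X i - X j : MvPolynomial (Fin (n + 1)) K) ≠ 0 :=
  sub_ne_zero.mpr fun h => hij (X_injective h)

private lemma divDiff_eq {i j : Fin (n + 1)} (hij : i ≠ j)
    {p c : MvPolynomial (Fin (n + 1)) K}
    (hc : p - rename (⇑(Equiv.swap i j)) p = (X i - X j) * c) : divDiff i j p = c :=
  mul_left_cancel₀ (X_sub_ne hij) (by rw [divDiff_spec, hc])

/-- An operator on polynomials that is additive and commutes with scalars. -/
private def GoodOp (op : MvPolynomial (Fin (n + 1)) K → MvPolynomial (Fin (n + 1)) K) : Prop :=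
  (∀ p q, op (p + q) = op p + op q) ∧ ∀ c p, op (C c * p) = C c * op p

private lemma GoodOp.zero (h : GoodOp op) : op 0 = 0 := by
  have := h.2 0 0; simpa using this

private lemma good_comp (h1 : GoodOp op1) (h2 : GoodOp op2) :
    GoodOp fun p => op1 (op2 p) :=
  ⟨fun p q => by show op1 (op2 (p + q)) = _; rw [h2.1, h1.1],
   fun c p => by show op1 (op2 (C c * p)) = _; rw [h2.2, h1.2]⟩

private lemma good_pderiv (k : Fin (n + 1)) :
    GoodOp fun p : MvPolynomial (Fin (n + 1)) K => pderiv k p :=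
  ⟨fun p q => map_add _ _ _, fun c p => pderiv_C_mul⟩

private lemma good_mulX (k : Fin (n + 1)) :
    GoodOp fun p : MvPolynomial (Fin (n + 1)) K => X k * p :=
  ⟨fun p q => mul_add _ _ _, fun c p => by ring⟩

private lemma good_rename (g : Fin (n + 1) → Fin (n + 1)) :
    GoodOp fun p : MvPolynomial (Fin (n + 1)) K => rename g p :=
  ⟨fun p q => map_add _ _ _, fun c p => by
    show rename g (C c * p) = _; rw [map_mul, rename_C]⟩

private lemma good_id : GoodOp fun p : MvPolynomial (Fin (n + 1)) K => p :=
  ⟨fun _ _ => rfl, fun _ _ => rfl⟩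

private lemma good_divDiff {i j : Fin (n + 1)} (hij : i ≠ j) : GoodOp (divDiff (K := K) i j) := by
  unfold GoodOp
  refine ⟨fun p q => ?_, fun c p => ?_⟩
  · refine divDiff_eq hij ?_
    rw [map_add, mul_add, divDiff_spec, divDiff_spec]
    ring
  · refine divDiff_eq hij ?_
    rw [map_mul, rename_C, mul_left_comm, divDiff_spec]
    ring

/-- The elementary tensor `v ⊗ q`. -/
private noncomputable def el (v : B →₀ K) (q : MvPolynomial (Fin (n + 1)) K) :
    B →₀ MvPolynomial (Fin (n + 1)) K :=
  v.sum fun b c => Finsupp.single b (C c * q)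

private lemma el_single (b : B) (c : K) (q : MvPolynomial (Fin (n + 1)) K) :
    el (Finsupp.single b c) q = Finsupp.single b (C c * q) := by
  unfold el
  rw [Finsupp.sum_single_index]; simp

private lemma el_zero (q : MvPolynomial (Fin (n + 1)) K) : el (0 : B →₀ K) q = 0 :=
  Finsupp.sum_zero_index

private lemma el_add (v w : B →₀ K) (q : MvPolynomial (Fin (n + 1)) K) :
    el (v + w) q = el v q + el w q :=
  Finsupp.sum_add_index' (fun b => by simp) fun b c d => by
    rw [map_add, add_mul, Finsupp.single_add]

private lemma el_smul_left (c : K) (v : B →₀ K) (q : MvPolynomial (Fin (n + 1)) K) :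
    el (c • v) q = el v (C c * q) := by
  induction v using Finsupp.induction with
  | zero => rw [smul_zero, el_zero, el_zero]
  | single_add b d v hb hd ih =>
      rw [smul_add, el_add, el_add, ih, Finsupp.smul_single, el_single, el_single,
        smul_eq_mul]
      congr 1
      rw [map_mul]; ring

private lemma el_smul_right (c : K) (v : B →₀ K) (q : MvPolynomial (Fin (n + 1)) K) :
    c • el v q = el v (C c * q) := by
  induction v using Finsupp.induction with
  | zero => rw [el_zero, el_zero, smul_zero]
  | single_add b d v hb hd ih =>
      rw [el_add, el_add, smul_add, ih, el_single, el_single, Finsupp.smul_single]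
      congr 1
      rw [smul_eq_C_mul]; ring

private lemma single_eq_el (b : B) (p : MvPolynomial (Fin (n + 1)) K) :
    Finsupp.single b p = el (Finsupp.single b 1) p := by
  rw [el_single]; simp

private lemma mixOp_zero : mixOp ρ op σ 0 = 0 :=
  Finsupp.sum_zero_index

private lemma mixOp_single (hop : GoodOp op) (b : B) (p : MvPolynomial (Fin (n + 1)) K) :
    mixOp ρ op σ (Finsupp.single b p) =
      ((ρ σ) (Finsupp.single b 1)).sum fun b' c => Finsupp.single b' (C c * op p) :=
  Finsupp.sum_single_index (by simp [hop.zero])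

private lemma mixOp_add (hop : GoodOp op) (f g : B →₀ MvPolynomial (Fin (n + 1)) K) :
    mixOp ρ op σ (f + g) = mixOp ρ op σ f + mixOp ρ op σ g := by
  refine Finsupp.sum_add_index' (fun b => by simp [hop.zero]) fun b p q => ?_
  rw [hop.1]
  simp only [mul_add, Finsupp.single_add]
  exact Finsupp.sum_add

private lemma mixOp_el (hop : GoodOp op) (v : B →₀ K) (q : MvPolynomial (Fin (n + 1)) K) :
    mixOp ρ op σ (el v q) = el ((ρ σ) v) (op q) := by
  induction v using Finsupp.induction with
  | zero => rw [el_zero, mixOp_zero, map_zero, el_zero]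
  | single_add b c v hb hc ih =>
      rw [el_add, mixOp_add ρ hop, ih, el_single, mixOp_single ρ hop, map_add, el_add]
      congr 1
      have h1 : (Finsupp.single b c : B →₀ K) = c • Finsupp.single b 1 := by
        rw [Finsupp.smul_single, smul_eq_mul, mul_one]
      rw [h1, map_smul, el_smul_left]
      unfold el
      refine Finsupp.sum_congr fun b' _ => ?_
      rw [hop.2]

private lemma mixOp_single' (hop : GoodOp op) (b : B) (p : MvPolynomial (Fin (n + 1)) K) :
    mixOp ρ op σ (Finsupp.single b p) = el ((ρ σ) (Finsupp.single b 1)) (op p) := by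
  rw [single_eq_el, mixOp_el ρ hop]

private lemma mixOp_comp (h1 : GoodOp op1) (h2 : GoodOp op2)
    (f : B →₀ MvPolynomial (Fin (n + 1)) K) :
    mixOp ρ op1 σ1 (mixOp ρ op2 σ2 f) = mixOp ρ (fun p => op1 (op2 p)) (σ1 * σ2) f := by
  induction f using Finsupp.induction with
  | zero => rw [mixOp_zero, mixOp_zero, mixOp_zero]
  | single_add b p f hb hp ih =>
      rw [mixOp_add ρ h2, mixOp_add ρ h1, mixOp_add ρ (good_comp h1 h2), ih]
      congr 1
      rw [mixOp_single' ρ h2, mixOp_el ρ h1, mixOp_single' ρ (good_comp h1 h2), map_mul,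
        Module.End.mul_apply]

private lemma mixOp_smul (hop : GoodOp op) (c : K) (f : B →₀ MvPolynomial (Fin (n + 1)) K) :
    mixOp ρ op σ (c • f) = c • mixOp ρ op σ f := by
  induction f using Finsupp.induction with
  | zero => rw [smul_zero, mixOp_zero, smul_zero]
  | single_add b p f hb hp ih =>
      rw [smul_add, mixOp_add ρ hop, mixOp_add ρ hop, smul_add, ih]
      congr 1
      rw [Finsupp.smul_single, mixOp_single' ρ hop, mixOp_single' ρ hop, el_smul_right]
      congr 1
      rw [smul_eq_C_mul, hop.2]

private lemma mixOp_neg (hop : GoodOp op) (f : B →₀ MvPolynomial (Fin (n + 1)) K) :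
    mixOp ρ op σ (-f) = -mixOp ρ op σ f := by
  rw [← neg_one_smul K f, mixOp_smul ρ hop, neg_one_smul]

private lemma mixOp_sub (hop : GoodOp op) (f g : B →₀ MvPolynomial (Fin (n + 1)) K) :
    mixOp ρ op σ (f - g) = mixOp ρ op σ f - mixOp ρ op σ g := by
  rw [sub_eq_add_neg, mixOp_add ρ hop, mixOp_neg ρ hop, sub_eq_add_neg]

private lemma mixOp_sum (hop : GoodOp op) {ι : Type*} (s : Finset ι)
    (g : ι → (B →₀ MvPolynomial (Fin (n + 1)) K)) :
    mixOp ρ op σ (∑ t ∈ s, g t) = ∑ t ∈ s, mixOp ρ op σ (g t) := by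
  classical
  induction s using Finset.induction with
  | empty => simp [mixOp_zero]
  | insert _ _ h ih => rw [Finset.sum_insert h, Finset.sum_insert h, mixOp_add ρ hop, ih]

private lemma mixOp_id (f : B →₀ MvPolynomial (Fin (n + 1)) K) :
    mixOp ρ (fun p => p) 1 f = f := by
  induction f using Finsupp.induction with
  | zero => rw [mixOp_zero]
  | single_add b p f hb hp ih =>
      rw [mixOp_add ρ good_id, ih]
      congr 1
      rw [mixOp_single' ρ good_id, map_one, Module.End.one_apply, ← single_eq_el]

private lemma sumSingle_eq (op : MvPolynomial (Fin (n + 1)) K → MvPolynomial (Fin (n + 1)) K)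
    (f : B →₀ MvPolynomial (Fin (n + 1)) K) :
    (f.sum fun b p => Finsupp.single b (op p)) = mixOp ρ op 1 f := by
  unfold mixOp
  refine Finsupp.sum_congr fun b _ => ?_
  rw [map_one, Module.End.one_apply, Finsupp.sum_single_index (by simp), C_1, one_mul]

private lemma mulXOp_eq (k : Fin (n + 1)) (f : B →₀ MvPolynomial (Fin (n + 1)) K) :
    mulXOp k f = mixOp ρ (fun p => X k * p) 1 f :=
  sumSingle_eq ρ _ f

private lemma permTensor_swap_eq (i j : Fin (n + 1)) (f : B →₀ MvPolynomial (Fin (n + 1)) K) :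
    permTensor ρ (Equiv.swap i j) f =
      mixOp ρ (rename ⇑(Equiv.swap i j)) (Equiv.swap i j) f := by
  unfold permTensor
  rw [Equiv.swap_inv]

private lemma permTensor_comp (σ τ : Equiv.Perm (Fin (n + 1)))
    (f : B →₀ MvPolynomial (Fin (n + 1)) K) :
    permTensor ρ σ (permTensor ρ τ f) = permTensor ρ (τ * σ) f := by
  unfold permTensor
  rw [mixOp_comp ρ (good_rename _) (good_rename _)]
  have h1 : (fun p => rename (⇑σ⁻¹) (rename (⇑τ⁻¹) p)) =
      ⇑(rename (R := K) (⇑(τ * σ)⁻¹)) := by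
    funext p
    simp [rename_rename, mul_inv_rev, Equiv.Perm.coe_mul]
  rw [h1, mul_inv_rev]

private lemma permTensor_one (f : B →₀ MvPolynomial (Fin (n + 1)) K) :
    permTensor ρ 1 f = f := by
  unfold permTensor
  rw [inv_one]
  have h : mixOp ρ (⇑(rename (R := K) (⇑(1 : Equiv.Perm (Fin (n + 1)))))) 1 f =
      mixOp ρ (fun p => p) 1 f := by
    congr 1
    funext p
    have h1 : (⇑(1 : Equiv.Perm (Fin (n + 1)))) = id := rfl
    rw [h1, rename_id, AlgHom.id_apply]
  rw [h, mixOp_id]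

private lemma permTensor_smul (σ : Equiv.Perm (Fin (n + 1))) (c : K)
    (f : B →₀ MvPolynomial (Fin (n + 1)) K) :
    permTensor ρ σ (c • f) = c • permTensor ρ σ f :=
  mixOp_smul ρ (good_rename _) c f

private lemma permTensor_sub (σ : Equiv.Perm (Fin (n + 1)))
    (f g : B →₀ MvPolynomial (Fin (n + 1)) K) :
    permTensor ρ σ (f - g) = permTensor ρ σ f - permTensor ρ σ g :=
  mixOp_sub ρ (good_rename _) f g

private lemma permTensor_add (σ : Equiv.Perm (Fin (n + 1)))
    (f g : B →₀ MvPolynomial (Fin (n + 1)) K) :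
    permTensor ρ σ (f + g) = permTensor ρ σ f + permTensor ρ σ g :=
  mixOp_add ρ (good_rename _) f g

private lemma permTensor_sum (σ : Equiv.Perm (Fin (n + 1))) {ι : Type*} (s : Finset ι)
    (g : ι → (B →₀ MvPolynomial (Fin (n + 1)) K)) :
    permTensor ρ σ (∑ t ∈ s, g t) = ∑ t ∈ s, permTensor ρ σ (g t) :=
  mixOp_sum ρ (good_rename _) s g

/-- The basic conjugation identity `s σ s⁻¹ = σ'`. -/
private lemma conj_perm (i j k m : Fin (n + 1)) :
    Equiv.swap i j * Equiv.swap k m =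
      Equiv.swap (Equiv.swap i j k) (Equiv.swap i j m) * Equiv.swap i j := by
  rw [Equiv.swap_apply_apply, inv_mul_cancel_right]

/-- Commuting a `mixOp` past `permTensor (swap i j)`. -/
private lemma mixOp_swap {i j : Fin (n + 1)}
    {op op' : MvPolynomial (Fin (n + 1)) K → MvPolynomial (Fin (n + 1)) K}
    (hop : GoodOp op) (hop' : GoodOp op') {σ σ' : Equiv.Perm (Fin (n + 1))}
    (hconj : ∀ p, op (rename (⇑(Equiv.swap i j)) p) =
      rename (⇑(Equiv.swap i j)) (op' p))
    (hσ : σ * Equiv.swap i j = Equiv.swap i j * σ')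
    (f : B →₀ MvPolynomial (Fin (n + 1)) K) :
    mixOp ρ op σ (permTensor ρ (Equiv.swap i j) f) =
      permTensor ρ (Equiv.swap i j) (mixOp ρ op' σ' f) := by
  rw [permTensor_swap_eq, permTensor_swap_eq, mixOp_comp ρ hop (good_rename _),
    mixOp_comp ρ (good_rename _) hop']
  rw [show (fun p => op (rename (⇑(Equiv.swap i j)) p)) =
    (fun p => rename (⇑(Equiv.swap i j)) (op' p)) from funext hconj, hσ]

private lemma conj_pderiv (i j k : Fin (n + 1)) (p : MvPolynomial (Fin (n + 1)) K) :
    pderiv k (rename (⇑(Equiv.swap i j)) p) =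
      rename (⇑(Equiv.swap i j)) (pderiv (Equiv.swap i j k) p) := by
  have h := pderiv_rename (Equiv.injective (Equiv.swap i j)) (Equiv.swap i j k) p
  rwa [Equiv.swap_apply_self] at h

private lemma conj_divDiff {i j k m : Fin (n + 1)} (hkm : k ≠ m)
    (p : MvPolynomial (Fin (n + 1)) K) :
    divDiff k m (rename (⇑(Equiv.swap i j)) p) =
      rename (⇑(Equiv.swap i j)) (divDiff (Equiv.swap i j k) (Equiv.swap i j m) p) := by
  refine divDiff_eq hkm ?_
  have h2 := congrArg (rename (R := K) (⇑(Equiv.swap i j)))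
    (divDiff_spec (Equiv.swap i j k) (Equiv.swap i j m) p)
  rw [map_mul, map_sub, map_sub, rename_X, rename_X, Equiv.swap_apply_self,
    Equiv.swap_apply_self, rename_rename] at h2
  rw [rename_rename]
  have hfun : (⇑(Equiv.swap k m) ∘ ⇑(Equiv.swap i j)) =
      (⇑(Equiv.swap i j) ∘ ⇑(Equiv.swap (Equiv.swap i j k) (Equiv.swap i j m))) := by
    rw [← Equiv.Perm.coe_mul, ← Equiv.Perm.coe_mul,
      conj_perm i j ((Equiv.swap i j) k) ((Equiv.swap i j) m), Equiv.swap_apply_self,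
      Equiv.swap_apply_self]
  rw [hfun]
  exact h2.symm

set_option maxHeartbeats 1000000 in
/-- Equivariance of the Dunkl operator under `swap i j`. -/
private lemma dunkl_swap (α : K) (i j k : Fin (n + 1))
    (f : B →₀ MvPolynomial (Fin (n + 1)) K) :
    dunklOp ρ α k (permTensor ρ (Equiv.swap i j) f) =
      permTensor ρ (Equiv.swap i j) (dunklOp ρ α (Equiv.swap i j k) f) := by
  unfold dunklOp
  rw [sumSingle_eq ρ (⇑(pderiv k)) (permTensor ρ (Equiv.swap i j) f),
    sumSingle_eq ρ (⇑(pderiv (Equiv.swap i j k))) f, permTensor_add, permTensor_smul,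
    permTensor_sum]
  congr 1
  · exact mixOp_swap ρ (good_pderiv _) (good_pderiv _) (conj_pderiv i j k)
      (by rw [one_mul, mul_one]) f
  · congr 1
    refine Finset.sum_equiv (Equiv.swap i j) (fun m => ?_) (fun m hm => ?_)
    · simp only [Finset.mem_filter, Finset.mem_univ, true_and]
      exact not_congr (Equiv.injective (Equiv.swap i j)).eq_iff.symm
    · simp only [Finset.mem_filter, Finset.mem_univ, true_and] at hm
      exact mixOp_swap ρ (good_divDiff (Ne.symm hm)) (good_divDiff (by
          exact fun h => hm (Equiv.injective (Equiv.swap i j) h).symm))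
        (conj_divDiff (Ne.symm hm))
        (by rw [conj_perm i j (Equiv.swap i j k) (Equiv.swap i j m),
              Equiv.swap_apply_self, Equiv.swap_apply_self]) f

private lemma xd_swap (α : K) (i j k : Fin (n + 1))
    (f : B →₀ MvPolynomial (Fin (n + 1)) K) :
    mulXOp k (dunklOp ρ α k (permTensor ρ (Equiv.swap i j) f)) =
      permTensor ρ (Equiv.swap i j)
        (mulXOp (Equiv.swap i j k) (dunklOp ρ α (Equiv.swap i j k) f)) := by
  rw [dunkl_swap, mulXOp_eq ρ, mulXOp_eq ρ]
  exact mixOp_swap ρ (good_mulX k) (good_mulX _)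
    (fun p => by rw [map_mul, rename_X, Equiv.swap_apply_self])
    (by rw [one_mul, mul_one]) _

private lemma cher_rel1 (α : K) {i j : Fin (n + 1)} (hj : (j : ℕ) = (i : ℕ) + 1)
    (f : B →₀ MvPolynomial (Fin (n + 1)) K) :
    cherednikOp ρ α i (permTensor ρ (Equiv.swap i j) f) =
      permTensor ρ (Equiv.swap i j) (cherednikOp ρ α j f) + α⁻¹ • f := by
  have hsi : Equiv.swap i j i = j := Equiv.swap_apply_left i j
  simp only [cherednikOp]
  rw [permTensor_sub, permTensor_smul, permTensor_sum]
  have h1 : mulXOp i (dunklOp ρ α i (permTensor ρ (Equiv.swap i j) f)) =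
      permTensor ρ (Equiv.swap i j) (mulXOp j (dunklOp ρ α j f)) := by
    have h := xd_swap ρ α i j i f
    rwa [hsi] at h
  rw [h1]
  have hfilter : Finset.univ.filter (fun m : Fin (n + 1) => m < j) =
      insert i (Finset.univ.filter (fun m : Fin (n + 1) => m < i)) := by
    ext m
    simp only [Finset.mem_filter, Finset.mem_univ, true_and, Finset.mem_insert]
    rw [Fin.lt_def, Fin.lt_def, hj, Fin.ext_iff]
    omega
  have hnotmem : i ∉ Finset.univ.filter (fun m : Fin (n + 1) => m < i) := by simp
  rw [hfilter, Finset.sum_insert hnotmem]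
  have hterm0 : permTensor ρ (Equiv.swap i j) (permTensor ρ (Equiv.swap j i) f) = f := by
    rw [permTensor_comp, Equiv.swap_comm j i, Equiv.swap_mul_self, permTensor_one]
  have hsum : ∀ m ∈ Finset.univ.filter (fun m : Fin (n + 1) => m < i),
      permTensor ρ (Equiv.swap i m) (permTensor ρ (Equiv.swap i j) f) =
        permTensor ρ (Equiv.swap i j) (permTensor ρ (Equiv.swap j m) f) := by
    intro m hm
    simp only [Finset.mem_filter, Finset.mem_univ, true_and] at hm
    have hmi : m ≠ i := ne_of_lt hm
    have hmj : m ≠ j := by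
      intro h
      subst h
      omega
    rw [permTensor_comp, permTensor_comp, conj_perm i j i m, hsi,
      Equiv.swap_apply_of_ne_of_ne hmi hmj]
  rw [Finset.sum_congr rfl hsum, hterm0, smul_add]
  abel

private lemma cher_rel2 (α : K) {i j : Fin (n + 1)} (hj : (j : ℕ) = (i : ℕ) + 1)
    (f : B →₀ MvPolynomial (Fin (n + 1)) K) :
    cherednikOp ρ α j (permTensor ρ (Equiv.swap i j) f) =
      permTensor ρ (Equiv.swap i j) (cherednikOp ρ α i f) - α⁻¹ • f := by
  have hsj : Equiv.swap i j j = i := Equiv.swap_apply_right i j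
  simp only [cherednikOp]
  rw [permTensor_sub, permTensor_smul, permTensor_sum]
  have h1 : mulXOp j (dunklOp ρ α j (permTensor ρ (Equiv.swap i j) f)) =
      permTensor ρ (Equiv.swap i j) (mulXOp i (dunklOp ρ α i f)) := by
    have h := xd_swap ρ α i j j f
    rwa [hsj] at h
  rw [h1]
  have hfilter : Finset.univ.filter (fun m : Fin (n + 1) => m < j) =
      insert i (Finset.univ.filter (fun m : Fin (n + 1) => m < i)) := by
    ext m
    simp only [Finset.mem_filter, Finset.mem_univ, true_and, Finset.mem_insert]
    rw [Fin.lt_def, Fin.lt_def, hj, Fin.ext_iff]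
    omega
  have hnotmem : i ∉ Finset.univ.filter (fun m : Fin (n + 1) => m < i) := by simp
  rw [hfilter, Finset.sum_insert hnotmem]
  have hterm0 : permTensor ρ (Equiv.swap j i) (permTensor ρ (Equiv.swap i j) f) = f := by
    rw [permTensor_comp, Equiv.swap_comm j i, Equiv.swap_mul_self, permTensor_one]
  have hsum : ∀ m ∈ Finset.univ.filter (fun m : Fin (n + 1) => m < i),
      permTensor ρ (Equiv.swap j m) (permTensor ρ (Equiv.swap i j) f) =
        permTensor ρ (Equiv.swap i j) (permTensor ρ (Equiv.swap i m) f) := by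
    intro m hm
    simp only [Finset.mem_filter, Finset.mem_univ, true_and] at hm
    have hmi : m ≠ i := ne_of_lt hm
    have hmj : m ≠ j := by
      intro h
      subst h
      omega
    rw [permTensor_comp, permTensor_comp, conj_perm i j j m, hsj,
      Equiv.swap_apply_of_ne_of_ne hmi hmj]
  rw [Finset.sum_congr rfl hsum, hterm0, smul_add]
  abel

private lemma cher_rel3 (α : K) {i j k : Fin (n + 1)} (hj : (j : ℕ) = (i : ℕ) + 1)
    (hki : k ≠ i) (hkj : k ≠ j)
    (f : B →₀ MvPolynomial (Fin (n + 1)) K) :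
    cherednikOp ρ α k (permTensor ρ (Equiv.swap i j) f) =
      permTensor ρ (Equiv.swap i j) (cherednikOp ρ α k f) := by
  have hsk : Equiv.swap i j k = k := Equiv.swap_apply_of_ne_of_ne hki hkj
  have hki' : (k : ℕ) ≠ (i : ℕ) := fun h => hki (Fin.val_injective h)
  have hkj' : (k : ℕ) ≠ (j : ℕ) := fun h => hkj (Fin.val_injective h)
  simp only [cherednikOp]
  rw [permTensor_sub, permTensor_smul, permTensor_sum]
  have h1 : mulXOp k (dunklOp ρ α k (permTensor ρ (Equiv.swap i j) f)) =
      permTensor ρ (Equiv.swap i j) (mulXOp k (dunklOp ρ α k f)) := by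
    have h := xd_swap ρ α i j k f
    rwa [hsk] at h
  rw [h1]
  rw [sub_right_inj]
  refine congrArg (α⁻¹ • ·) ?_
  refine Finset.sum_equiv (Equiv.swap i j) (fun m => ?_) (fun m hm => ?_)
  · simp only [Finset.mem_filter, Finset.mem_univ, true_and]
    rcases eq_or_ne m i with rfl | hmi
    · rw [Equiv.swap_apply_left, Fin.lt_def, Fin.lt_def, hj]
      omega
    rcases eq_or_ne m j with rfl | hmj
    · rw [Equiv.swap_apply_right, Fin.lt_def, Fin.lt_def, hj]
      omega
    · rw [Equiv.swap_apply_of_ne_of_ne hmi hmj]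
  · rw [permTensor_comp, permTensor_comp, conj_perm i j k m, hsk]

end HeckeAux

/-- The Hecke-type relations of the Cherednik–Dunkl operators (as right
operators, so that `(s_i ⊗ s_i) ξ̃_i` means: first apply `s_i ⊗ s_i`, then
`ξ̃_i`): `(s_i⊗s_i) ξ̃_i = ξ̃_{i+1} (s_i⊗s_i) + 1`,
`(s_i⊗s_i) ξ̃_{i+1} = ξ̃_i (s_i⊗s_i) − 1`, and
`(s_i⊗s_i) ξ̃_j = ξ̃_j (s_i⊗s_i)` for `j ≠ i, i+1`. -/
theorem xiOp_hecke_relations (ρ : Representation K (Equiv.Perm (Fin (n + 1))) (B →₀ K))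
    (α : K) (hα : α ≠ 0) (i j : Fin (n + 1)) (hj : (j : ℕ) = (i : ℕ) + 1) :
    (∀ f : B →₀ MvPolynomial (Fin (n + 1)) K,
      xiOp ρ α i (permTensor ρ (Equiv.swap i j) f) =
        permTensor ρ (Equiv.swap i j) (xiOp ρ α j f) + f) ∧
    (∀ f : B →₀ MvPolynomial (Fin (n + 1)) K,
      xiOp ρ α j (permTensor ρ (Equiv.swap i j) f) =
        permTensor ρ (Equiv.swap i j) (xiOp ρ α i f) - f) ∧
    (∀ k : Fin (n + 1), k ≠ i → k ≠ j →
      ∀ f : B →₀ MvPolynomial (Fin (n + 1)) K,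
        xiOp ρ α k (permTensor ρ (Equiv.swap i j) f) =
          permTensor ρ (Equiv.swap i j) (xiOp ρ α k f)) := by
  refine ⟨fun f => ?_, fun f => ?_, fun k hki hkj f => ?_⟩
  · simp only [xiOp]
    rw [cher_rel1 ρ α hj f, permTensor_sub, permTensor_smul, permTensor_smul, smul_add,
      smul_smul, mul_inv_cancel₀ hα, one_smul]
    abel
  · simp only [xiOp]
    rw [cher_rel2 ρ α hj f, permTensor_sub, permTensor_smul, permTensor_smul, smul_sub,
      smul_smul, mul_inv_cancel₀ hα, one_smul]
    abel
  · simp only [xiOp]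
    rw [cher_rel3 ρ α hj hki hkj f, permTensor_sub, permTensor_smul, permTensor_smul]
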